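/- arXiv:2201.02530 — 3 statements merged into one kernel-verified Lean document; each statement's English description precedes it below -/
import Mathlib

section
/- The function u : ℝ⁶ → ℝ defined by u(x) = 24 / (1 + |x|²)² is positive and satisfies Δu + u² = 0 on all of ℝ⁶ (where Δ is the Euclidean Laplacian); in particular, viewed as a function constant in time, it is a positive eternal solution of u_t = Δu + u². -/
open scoped RealInnerProductSpace

section aux

noncomputable def Fgrad (x : EuclideanSpace ℝ (Fin 6)) :
    EuclideanSpace ℝ (Fin 6) →L[ℝ] ℝ :=
  (-96 / (1 + ‖x‖ ^ 2) ^ 3) • innerSL ℝ x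

/-- The real inner product, as a continuous ℝ-linear map into continuous linear functionals. -/
noncomputable def Tinner :
    EuclideanSpace ℝ (Fin 6) →L[ℝ] EuclideanSpace ℝ (Fin 6) →L[ℝ] ℝ :=
  LinearMap.toContinuousLinearMap
    { toFun := fun y => innerSL ℝ y
      map_add' := fun a b => by ext v; simp [inner_add_left]
      map_smul' := fun r a => by ext v; simp [inner_smul_left] }

lemma Tinner_apply (y v : EuclideanSpace ℝ (Fin 6)) : Tinner y v = ⟪y, v⟫ := rfl

lemma one_add_norm_sq_pos (x : EuclideanSpace ℝ (Fin 6)) : (0:ℝ) < 1 + ‖x‖ ^ 2 := by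
  positivity

lemma hasFDerivAt_u (x : EuclideanSpace ℝ (Fin 6)) :
    HasFDerivAt (fun y : EuclideanSpace ℝ (Fin 6) => 24 / (1 + ‖y‖ ^ 2) ^ 2)
      (Fgrad x) x := by
  have hq : HasFDerivAt (fun y : EuclideanSpace ℝ (Fin 6) => ‖y‖ ^ 2)
      (2 • innerSL ℝ x) x := (hasStrictFDerivAt_norm_sq x).hasFDerivAt
  have hpos := one_add_norm_sq_pos x
  have hh : HasDerivAt (fun t : ℝ => 24 / (1 + t) ^ 2)
      (-48 / (1 + ‖x‖ ^ 2) ^ 3) (‖x‖ ^ 2) := by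
    have h1 : HasDerivAt (fun t : ℝ => (1 + t) ^ 2) (2 * (1 + ‖x‖ ^ 2)) (‖x‖ ^ 2) := by
      have := ((hasDerivAt_id (‖x‖ ^ 2)).const_add 1).pow 2
      simp [mul_comm] at this
      exact this
    have := (hasDerivAt_const (‖x‖ ^ 2) (24:ℝ)).div h1 (by positivity)
    refine HasDerivAt.congr_deriv this ?_
    field_simp
    ring
  have := hh.comp_hasFDerivAt x hq
  refine HasFDerivAt.congr_fderiv this ?_
  ext v
  simp only [Fgrad, ContinuousLinearMap.coe_smul', Pi.smul_apply, smul_eq_mul]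
  ring

lemma hasFDerivAt_Fgrad (x : EuclideanSpace ℝ (Fin 6)) :
    HasFDerivAt Fgrad
      ((-96 / (1 + ‖x‖ ^ 2) ^ 3) • Tinner +
        ((576 / (1 + ‖x‖ ^ 2) ^ 4) • innerSL ℝ x).smulRight (innerSL ℝ x)) x := by
  have hq : HasFDerivAt (fun y : EuclideanSpace ℝ (Fin 6) => ‖y‖ ^ 2)
      (2 • innerSL ℝ x) x := (hasStrictFDerivAt_norm_sq x).hasFDerivAt
  have hpos := one_add_norm_sq_pos x
  have hc : HasDerivAt (fun t : ℝ => -96 / (1 + t) ^ 3)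
      (288 / (1 + ‖x‖ ^ 2) ^ 4) (‖x‖ ^ 2) := by
    have h1 : HasDerivAt (fun t : ℝ => (1 + t) ^ 3)
        (3 * (1 + ‖x‖ ^ 2) ^ 2) (‖x‖ ^ 2) := by
      have := ((hasDerivAt_id (‖x‖ ^ 2)).const_add 1).pow 3
      simp [mul_comm] at this
      exact this
    have := (hasDerivAt_const (‖x‖ ^ 2) (-96:ℝ)).div h1 (by positivity)
    refine HasDerivAt.congr_deriv this ?_
    field_simp
    ring
  have hcF : HasFDerivAt (fun y : EuclideanSpace ℝ (Fin 6) => -96 / (1 + ‖y‖ ^ 2) ^ 3)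
      ((288 / (1 + ‖x‖ ^ 2) ^ 4) • (2 • innerSL ℝ x)) x :=
    by have := hc.comp_hasFDerivAt x hq; exact this
  have hlin : HasFDerivAt (fun y : EuclideanSpace ℝ (Fin 6) => Tinner y) Tinner x :=
    Tinner.hasFDerivAt
  have H := hcF.smul hlin
  have hfun : (fun y : EuclideanSpace ℝ (Fin 6) =>
      (-96 / (1 + ‖y‖ ^ 2) ^ 3) • Tinner y) = Fgrad := by
    funext y
    ext v
    simp [Fgrad, Tinner_apply]
  rw [← hfun]
  have h2 : ((288 / (1 + ‖x‖ ^ 2) ^ 4) • 2 • innerSL ℝ x).smulRight (Tinner x)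
      = ((576 / (1 + ‖x‖ ^ 2) ^ 4) • innerSL ℝ x).smulRight (innerSL ℝ x) := by
    ext v w
    simp only [ContinuousLinearMap.smulRight_apply, ContinuousLinearMap.coe_smul',
      Pi.smul_apply, smul_eq_mul, ContinuousLinearMap.smul_apply, Tinner_apply, innerSL_apply_apply]
    ring
  rwa [h2] at H

end aux

/-- Talenti's function `u(x) = 24 / (1 + |x|²)²` on `ℝ⁶` is positive and satisfies
`Δu + u² = 0`, where the Euclidean Laplacian is the sum of the six pure second
partial derivatives. -/
theorem stmt0 :
    let u : EuclideanSpace ℝ (Fin 6) → ℝ := fun x => 24 / (1 + ‖x‖ ^ 2) ^ 2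
    (∀ x, 0 < u x) ∧
      ∀ x, (∑ i : Fin 6,
          iteratedFDeriv ℝ 2 u x ![EuclideanSpace.single i (1 : ℝ),
            EuclideanSpace.single i (1 : ℝ)]) + (u x) ^ 2 = 0 := by
  intro u
  constructor
  · intro x
    have := one_add_norm_sq_pos x
    positivity
  · intro x
    have hpos := one_add_norm_sq_pos x
    have hfd : fderiv ℝ u = Fgrad := funext fun y => (hasFDerivAt_u y).fderiv
    have key : ∀ i : Fin 6,
        iteratedFDeriv ℝ 2 u x ![EuclideanSpace.single i (1 : ℝ),
            EuclideanSpace.single i (1 : ℝ)] =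
          -96 / (1 + ‖x‖ ^ 2) ^ 3 +
            576 / (1 + ‖x‖ ^ 2) ^ 4 * (x i * x i) := by
      intro i
      rw [iteratedFDeriv_two_apply, hfd, (hasFDerivAt_Fgrad x).fderiv]
      simp only [Matrix.cons_val_zero, Matrix.cons_val_one, Matrix.head_cons,
        ContinuousLinearMap.add_apply, ContinuousLinearMap.coe_smul', Pi.smul_apply,
        ContinuousLinearMap.smulRight_apply, ContinuousLinearMap.smul_apply,
        smul_eq_mul, innerSL_apply_apply, Tinner_apply]
      simp only [EuclideanSpace.inner_single_left, EuclideanSpace.inner_single_right,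
        EuclideanSpace.single_apply, starRingEnd_apply, star_trivial, map_one, if_pos rfl, eq_self_iff_true, if_true,
        mul_one, one_mul]
      ring
    rw [Finset.sum_congr rfl fun i _ => key i]
    have hsum : ∑ i : Fin 6, x i * x i = ‖x‖ ^ 2 := by
      rw [← real_inner_self_eq_norm_sq]
      simp only [PiLp.inner_apply, RCLike.inner_apply, conj_trivial]
    rw [Finset.sum_add_distrib, ← Finset.mul_sum, hsum]
    simp only [Finset.sum_const, Finset.card_univ, Fintype.card_fin, nsmul_eq_mul]
    show (6:ℕ) * (-96 / (1 + ‖x‖ ^ 2) ^ 3) + 576 / (1 + ‖x‖ ^ 2) ^ 4 * ‖x‖ ^ 2 +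
      (24 / (1 + ‖x‖ ^ 2) ^ 2) ^ 2 = 0
    have h := hpos.ne'
    field_simp
    ring
end

section
/- Let ε > 0, T > 0, and let F : [0, T] → ℝ be a locally Lipschitz function with F(0) = 0 such that for almost every t ∈ (0,T], if F(t) < −1/ε then F is differentiable at t and F'(t) > 0. Then F(t) ≥ −1/ε for every t ∈ [0, T]. -/
open MeasureTheory Set Filter Topology

/-- If `F` is locally Lipschitz on `[0,T]` with `F(0) = 0` and, at almost every
`t ∈ (0,T]` where `F(t) < −1/ε`, `F` is differentiable with `F'(t) > 0`, then
`F ≥ −1/ε` on `[0,T]`. -/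
theorem stmt13 (ε T : ℝ) (hε : 0 < ε) (hT : 0 < T) (F : ℝ → ℝ)
    (hlip : LocallyLipschitzOn (Set.Icc 0 T) F) (h0 : F 0 = 0)
    (hder : ∀ᵐ t ∂(volume.restrict (Set.Ioc 0 T)),
      F t < -1 / ε → DifferentiableAt ℝ F t ∧ 0 < deriv F t) :
    ∀ t ∈ Set.Icc (0 : ℝ) T, -1 / ε ≤ F t := by
  classical
  have hcF : ContinuousOn F (Set.Icc 0 T) := hlip.continuousOn
  -- uniform local slope bound from compactness
  obtain ⟨K, hK⟩ : ∃ K : NNReal, ∀ x ∈ Set.Icc (0:ℝ) T, ∀ᶠ z in 𝓝 x,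
      z ∈ Set.Icc (0:ℝ) T → dist (F z) (F x) ≤ (K:ℝ) * dist z x := by
    have H : ∀ x ∈ Set.Icc (0:ℝ) T, ∃ (K : NNReal) (O : Set ℝ), IsOpen O ∧ x ∈ O ∧
        LipschitzOnWith K F (O ∩ Set.Icc 0 T) := by
      intro x hx
      obtain ⟨K, t, ht, hKl⟩ := hlip hx
      obtain ⟨O, hO, hxO, hsub⟩ := mem_nhdsWithin.1 ht
      exact ⟨K, O, hO, hxO, hKl.mono hsub⟩
    choose! Kf Of hOopen hxO hKf using H
    obtain ⟨tf, htf⟩ := isCompact_Icc.elim_nhds_subcover' (fun x _ => Of x)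
      (fun x hx => (hOopen x hx).mem_nhds (hxO x hx))
    refine ⟨tf.sup fun x => Kf x, fun x hx => ?_⟩
    obtain ⟨i, hit, hxi⟩ := Set.mem_iUnion₂.1 (htf hx)
    filter_upwards [(hOopen i i.2).mem_nhds hxi] with z hzO hzT
    have h1 := (hKf i i.2).dist_le_mul z ⟨hzO, hzT⟩ x ⟨hxi, hx⟩
    have h2 : (Kf i : ℝ) ≤ ((tf.sup fun x => Kf x : NNReal) : ℝ) :=
      NNReal.coe_le_coe.2 (Finset.le_sup (s := tf) (f := fun x => Kf ↑x) hit)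
    exact h1.trans (mul_le_mul_of_nonneg_right h2 dist_nonneg)
  intro t₀ ht₀
  by_contra hcon
  push_neg at hcon
  set c : ℝ := -1 / ε with hc
  have hcneg : c < 0 := by
    rw [hc]; have := one_div_pos.2 hε; rw [neg_div]; linarith
  have ht₀0 : (0:ℝ) ≤ t₀ := ht₀.1
  have ht₀T : t₀ ≤ T := ht₀.2
  set A : Set ℝ := Set.Icc 0 t₀ ∩ F ⁻¹' Set.Ici c with hA
  have hAclosed : IsClosed A :=
    (hcF.mono (Set.Icc_subset_Icc le_rfl ht₀T)).preimage_isClosed_of_isClosed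
      isClosed_Icc isClosed_Ici
  have hA0 : (0:ℝ) ∈ A :=
    ⟨⟨le_rfl, ht₀0⟩, by simp only [Set.mem_preimage, h0, Set.mem_Ici]; linarith⟩
  have hAcomp : IsCompact A :=
    isCompact_Icc.of_isClosed_subset hAclosed Set.inter_subset_left
  set s := sSup A with hsdef
  have hsA : s ∈ A := hAcomp.sSup_mem ⟨0, hA0⟩
  have hs0 : 0 ≤ s := hsA.1.1
  have hFs : c ≤ F s := hsA.2
  have hst₀ : s < t₀ := by
    rcases lt_or_eq_of_le hsA.1.2 with h | h
    · exact h
    · exfalso; rw [h] at hFs; linarith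
  have hsT : s ≤ T := le_trans hsA.1.2 ht₀T
  have hFlt : ∀ x ∈ Set.Ioc s t₀, F x < c := by
    intro x hx
    by_contra h
    push_neg at h
    have hxA : x ∈ A := ⟨⟨hs0.trans hx.1.le, hx.2⟩, h⟩
    exact absurd (le_csSup hAcomp.bddAbove hxA) (not_le.2 hx.1)
  have main : ∀ δ : ℝ, 0 < δ → c ≤ F t₀ + ((K:ℝ)+3)*δ := by
    intro δ hδ
    -- the exceptional null set and a small open cover of it
    have hN : volume ({t | F t < c ∧ ¬(DifferentiableAt ℝ F t ∧ 0 < deriv F t)}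
        ∩ Set.Ioc 0 T) = 0 := by
      have h1 := ae_iff.1 hder
      rw [Measure.restrict_apply' measurableSet_Ioc] at h1
      have hset : {a | ¬(F a < c → DifferentiableAt ℝ F a ∧ 0 < deriv F a)}
          = {t | F t < c ∧ ¬(DifferentiableAt ℝ F t ∧ 0 < deriv F t)} := by
        ext t
        simp only [Set.mem_setOf_eq, Classical.not_imp]
      rw [hset] at h1
      exact h1
    obtain ⟨Uo, hNU, hUopen, hUvol⟩ := Set.exists_isOpen_lt_of_lt
      ({t | F t < c ∧ ¬(DifferentiableAt ℝ F t ∧ 0 < deriv F t)} ∩ Set.Ioc 0 T)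
      (ENNReal.ofReal δ) (by rw [hN]; exact ENNReal.ofReal_pos.2 hδ)
    have hUfin : volume Uo ≠ ⊤ := (hUvol.trans ENNReal.ofReal_lt_top).ne
    -- the perturbation m
    set m : ℝ → ℝ := fun t => (volume (Uo ∩ Set.Ioc s t)).toReal with hm
    have hmdiff : ∀ x z, s ≤ x → x ≤ z →
        m z - m x = (volume (Uo ∩ Set.Ioc x z)).toReal := by
      intro x z hsx hxz
      have hsplit : Uo ∩ Set.Ioc s z = (Uo ∩ Set.Ioc s x) ∪ (Uo ∩ Set.Ioc x z) := by
        rw [← Set.inter_union_distrib_left, Set.Ioc_union_Ioc_eq_Ioc hsx hxz]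
      have hdisj : Disjoint (Uo ∩ Set.Ioc s x) (Uo ∩ Set.Ioc x z) :=
        Disjoint.mono Set.inter_subset_right Set.inter_subset_right
          (Set.Ioc_disjoint_Ioc_of_le le_rfl)
      have hmeas : MeasurableSet (Uo ∩ Set.Ioc x z) :=
        hUopen.measurableSet.inter measurableSet_Ioc
      have h1 : volume (Uo ∩ Set.Ioc s z)
          = volume (Uo ∩ Set.Ioc s x) + volume (Uo ∩ Set.Ioc x z) := by
        rw [hsplit, measure_union hdisj hmeas]
      have f1 : volume (Uo ∩ Set.Ioc s x) ≠ ⊤ :=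
        ne_top_of_le_ne_top hUfin (measure_mono Set.inter_subset_left)
      have f2 : volume (Uo ∩ Set.Ioc x z) ≠ ⊤ :=
        ne_top_of_le_ne_top hUfin (measure_mono Set.inter_subset_left)
      simp only [hm]
      rw [h1, ENNReal.toReal_add f1 f2]
      ring
    have hmmono : ∀ x z, s ≤ x → x ≤ z → m x ≤ m z := by
      intro x z h1 h2
      have h3 := hmdiff x z h1 h2
      have h4 : (0:ℝ) ≤ (volume (Uo ∩ Set.Ioc x z)).toReal := ENNReal.toReal_nonneg
      linarith
    have hmub : ∀ x z, s ≤ x → x ≤ z → m z - m x ≤ z - x := by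
      intro x z h1 h2
      rw [hmdiff x z h1 h2]
      have h3 : volume (Uo ∩ Set.Ioc x z) ≤ volume (Set.Ioc x z) :=
        measure_mono Set.inter_subset_right
      rw [Real.volume_Ioc] at h3
      have h4 := ENNReal.toReal_mono ENNReal.ofReal_ne_top h3
      rwa [ENNReal.toReal_ofReal (by linarith)] at h4
    have hmcont : ContinuousOn m (Set.Icc s t₀) := by
      have hl : LipschitzOnWith 1 m (Set.Icc s t₀) := by
        apply LipschitzOnWith.of_dist_le_mul
        intro x hx y hy
        rw [NNReal.coe_one, one_mul, Real.dist_eq, Real.dist_eq]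
        rcases le_total x y with h | h
        · have h1 := hmmono x y hx.1 h
          have h2 := hmub x y hx.1 h
          rw [abs_of_nonpos (by linarith), abs_of_nonpos (by linarith)]
          linarith
        · have h1 := hmmono y x hy.1 h
          have h2 := hmub y x hy.1 h
          rw [abs_of_nonneg (by linarith), abs_of_nonneg (by linarith)]
          linarith
      exact hl.continuousOn
    -- pick s' slightly to the right of s
    obtain ⟨s', hs'mem, hFs'⟩ : ∃ s', s' ∈ Set.Ioc s t₀ ∧ c - δ < F s' := by
      have hne : (𝓝[Set.Ioc s t₀] s).NeBot := by
        rw [← mem_closure_iff_nhdsWithin_neBot, closure_Ioc hst₀.ne]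
        exact ⟨le_rfl, hst₀.le⟩
      have hsub : Set.Ioc s t₀ ⊆ Set.Icc 0 T :=
        fun x hx => ⟨hs0.trans hx.1.le, hx.2.trans ht₀T⟩
      have htend : Tendsto F (𝓝[Set.Ioc s t₀] s) (𝓝 (F s)) :=
        (hcF s ⟨hs0, hsT⟩).mono_left (nhdsWithin_mono s hsub)
      have hev : ∀ᶠ z in 𝓝[Set.Ioc s t₀] s, c - δ < F z :=
        htend (Ioi_mem_nhds (by linarith))
      obtain ⟨s', hs'1, hs'2⟩ := (hev.and self_mem_nhdsWithin).exists
      exact ⟨s', hs'2, hs'1⟩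
    have hs's : s < s' := hs'mem.1
    have hs't₀ : s' ≤ t₀ := hs'mem.2
    have hs'0 : (0:ℝ) ≤ s' := hs0.trans hs's.le
    set C : ℝ := (K:ℝ) + 2 with hCdef
    have hC0 : (0:ℝ) ≤ C := by rw [hCdef]; positivity
    -- points off Uo in (s,t₀) are good points
    have hgood : ∀ x, x ∈ Set.Ico s' t₀ → x ∉ Uo →
        DifferentiableAt ℝ F x ∧ 0 < deriv F x := by
      intro x hx hxU
      by_contra hbad
      exact hxU (hNU ⟨⟨hFlt x ⟨hs's.trans_le hx.1, hx.2.le⟩, hbad⟩,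
        ⟨hs0.trans_lt (hs's.trans_le hx.1), hx.2.le.trans ht₀T⟩⟩)
    -- fencing
    have hsub2 : Set.Icc s' t₀ ⊆ Set.Icc 0 T := Set.Icc_subset_Icc hs'0 ht₀T
    have hcont : ContinuousOn (fun t => -(F t + C * m t)) (Set.Icc s' t₀) :=
      ((hcF.mono hsub2).add
        (continuousOn_const.mul (hmcont.mono (Set.Icc_subset_Icc hs's.le le_rfl)))).neg
    have hf' : ∀ x ∈ Set.Ico s' t₀, ∀ r : ℝ,
        (if x ∈ Uo then (-1:ℝ) else -(deriv F x)) < r →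
        ∃ᶠ z in 𝓝[>] x, slope (fun t => -(F t + C * m t)) x z < r := by
      intro x hx r hr
      have hxIcc : x ∈ Set.Icc (0:ℝ) T := ⟨hs'0.trans hx.1, hx.2.le.trans ht₀T⟩
      have hsx : s ≤ x := hs's.le.trans hx.1
      by_cases hxU : x ∈ Uo
      · rw [if_pos hxU] at hr
        obtain ⟨η, hη, hball⟩ := Metric.isOpen_iff.1 hUopen x hxU
        have h1 : Set.Ioo x (min (x+η) t₀) ∈ 𝓝[>] x :=
          Ioo_mem_nhdsGT_of_mem ⟨le_rfl, lt_min (by linarith) hx.2⟩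
        have h2 : ∀ᶠ z in 𝓝[>] x, z ∈ Set.Icc (0:ℝ) T →
            dist (F z) (F x) ≤ (K:ℝ) * dist z x :=
          (hK x hxIcc).filter_mono nhdsWithin_le_nhds
        refine (((eventually_mem_nhdsWithin.and ((eventually_of_mem h1 (fun z hz => hz)).and
          h2))).mono ?_).frequently
        rintro z ⟨hz1, hz2, hz3⟩
        have hxz : x < z := hz1
        have hzT : z ∈ Set.Icc (0:ℝ) T :=
          ⟨hxIcc.1.trans hxz.le, ((hz2.2.trans_le (min_le_right _ _)).le).trans ht₀T⟩
        have habs : |F z - F x| ≤ (K:ℝ) * (z - x) := by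
          have h := hz3 hzT
          rwa [Real.dist_eq, Real.dist_eq, abs_of_pos (sub_pos.2 hxz)] at h
        have hFb : -((K:ℝ) * (z - x)) ≤ F z - F x := neg_le_of_abs_le habs
        have hmz : m z - m x = z - x := by
          rw [hmdiff x z hsx hxz.le]
          have hsubU : Set.Ioc x z ⊆ Uo := by
            intro u hu
            apply hball
            rw [Metric.mem_ball, Real.dist_eq, abs_of_pos (sub_pos.2 hu.1)]
            have h5 : z < x + η := lt_of_lt_of_le hz2.2 (min_le_left _ _)
            linarith [hu.2]
          rw [Set.inter_eq_right.2 hsubU, Real.volume_Ioc,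
            ENNReal.toReal_ofReal (by linarith)]
        have hCm : C * m z - C * m x = C * (z - x) := by rw [← mul_sub, hmz]
        have hCD : C * (z - x) = (K:ℝ)*(z-x) + 2*(z-x) := by rw [hCdef]; ring
        rw [slope_def_field, div_lt_iff₀ (sub_pos.2 hxz)]
        have hrr : (-1:ℝ) * (z - x) < r * (z - x) :=
          mul_lt_mul_of_pos_right hr (sub_pos.2 hxz)
        linarith [sub_pos.2 hxz]
      · rw [if_neg hxU] at hr
        obtain ⟨hdiff, hpos⟩ := hgood x hx hxU
        have htend := hasDerivAt_iff_tendsto_slope.1 hdiff.hasDerivAt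
        have hev : ∀ᶠ z in 𝓝[≠] x, -r < slope F x z :=
          htend (Ioi_mem_nhds (by linarith))
        have hle : 𝓝[>] x ≤ 𝓝[≠] x :=
          nhdsWithin_mono x (fun z hz => Set.mem_compl_singleton_iff.2 (ne_of_gt hz))
        have hev' : ∀ᶠ z in 𝓝[>] x, -r < slope F x z := hev.filter_mono hle
        refine ((hev'.and eventually_mem_nhdsWithin).mono ?_).frequently
        rintro z ⟨hz1, hz2⟩
        have hxz : x < z := hz2
        have hmm : m x ≤ m z := hmmono x z hsx hxz.le
        rw [slope_def_field, lt_div_iff₀ (sub_pos.2 hxz)] at hz1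
        rw [slope_def_field, div_lt_iff₀ (sub_pos.2 hxz)]
        have hCm : 0 ≤ C * (m z - m x) := mul_nonneg hC0 (by linarith)
        linarith
    have hbound : ∀ x ∈ Set.Ico s' t₀,
        (fun t => -(F t + C * m t)) x = (fun _ => -(F s' + C * m s')) x →
        (if x ∈ Uo then (-1:ℝ) else -(deriv F x)) < (fun _ => (0:ℝ)) x := by
      intro x hx _
      by_cases hxU : x ∈ Uo
      · rw [if_pos hxU]; norm_num
      · rw [if_neg hxU]
        have := (hgood x hx hxU).2
        simp only
        linarith
    have happ := image_le_of_liminf_slope_right_lt_deriv_boundary'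
      (f := fun t => -(F t + C * m t))
      (f' := fun x => if x ∈ Uo then (-1:ℝ) else -(deriv F x))
      (a := s') (b := t₀)
      hcont hf' (B := fun _ => -(F s' + C * m s')) (B' := fun _ => (0:ℝ))
      le_rfl continuousOn_const
      (fun x _ => hasDerivWithinAt_const x _ _) hbound (Set.right_mem_Icc.2 hs't₀)
    have hmd : m t₀ - m s' ≤ δ := by
      rw [hmdiff s' t₀ hs's.le hs't₀]
      have h2 : volume (Uo ∩ Set.Ioc s' t₀) ≤ volume Uo :=
        measure_mono Set.inter_subset_left
      have h3 := ENNReal.toReal_mono hUfin h2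
      have h4 : (volume Uo).toReal ≤ δ := by
        have h5 := ENNReal.toReal_mono ENNReal.ofReal_ne_top hUvol.le
        rwa [ENNReal.toReal_ofReal hδ.le] at h5
      linarith
    have hCd : C * (m t₀ - m s') ≤ C * δ := mul_le_mul_of_nonneg_left hmd hC0
    have hCδ : C * δ = (K:ℝ)*δ + 2*δ := by rw [hCdef]; ring
    linarith
  have hfin : c ≤ F t₀ := by
    refine le_of_forall_pos_le_add fun η hη => ?_
    have hK3 : (0:ℝ) < (K:ℝ) + 3 := by positivity
    have h1 := main (η / ((K:ℝ)+3)) (by positivity)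
    have h2 : ((K:ℝ)+3) * (η / ((K:ℝ)+3)) = η := by field_simp
    linarith
  linarith
end

section
/- Let p > 1, T > 0, and let m : [0,T) → ℝ be a positive locally Lipschitz function satisfying m'(t) ≤ m(t)^p at almost every t, and suppose limsup_{t→T} m(t) = +∞. Then m(t) ≥ ((p−1)(T−t))^(−1/(p−1)) for every t ∈ [0,T). (This is the lower blow-up rate estimate (5.1) for u_max.) -/
open MeasureTheory Set Filter

/-- Chaining Lipschitz bounds on adjacent intervals. -/
lemma lip_join_aux {f : ℝ → ℝ} {K K' : NNReal} {a y c : ℝ} (hay : a ≤ y) (hyc : y ≤ c)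
    (h1 : LipschitzOnWith K f (Set.Icc a y)) (h2 : LipschitzOnWith K' f (Set.Icc y c)) :
    LipschitzOnWith (K ⊔ K') f (Set.Icc a c) := by
  rw [lipschitzOnWith_iff_dist_le_mul] at h1 h2 ⊢
  have hK : (K : ℝ) ≤ ((K ⊔ K' : NNReal) : ℝ) := by exact_mod_cast le_sup_left
  have hK' : (K' : ℝ) ≤ ((K ⊔ K' : NNReal) : ℝ) := by exact_mod_cast le_sup_right
  have main : ∀ x ∈ Set.Icc a c, ∀ z ∈ Set.Icc a c, x ≤ z →
      dist (f x) (f z) ≤ ((K ⊔ K' : NNReal) : ℝ) * dist x z := by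
    intro x hx z hz hxz
    have hd : (0:ℝ) ≤ dist x z := dist_nonneg
    rcases le_total z y with hzy | hyz
    · have h0 := h1 x ⟨hx.1, hxz.trans hzy⟩ z ⟨hz.1, hzy⟩
      nlinarith
    · rcases le_total y x with hyx | hxy
      · have h0 := h2 x ⟨hyx, hx.2⟩ z ⟨hyz, hz.2⟩
        nlinarith
      · have d1 := h1 x ⟨hx.1, hxy⟩ y (Set.right_mem_Icc.2 hay)
        have d2 := h2 y ⟨le_rfl, hyz.trans hz.2⟩ z ⟨hyz, hz.2⟩
        have dxy : dist x y = y - x := by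
          rw [Real.dist_eq, abs_of_nonpos (by linarith : x - y ≤ 0)]; ring
        have dyz : dist y z = z - y := by
          rw [Real.dist_eq, abs_of_nonpos (by linarith : y - z ≤ 0)]; ring
        have dxz : dist x z = z - x := by
          rw [Real.dist_eq, abs_of_nonpos (by linarith : x - z ≤ 0)]; ring
        have dtri := dist_triangle (f x) (f y) (f z)
        rw [dxy] at d1
        rw [dyz] at d2
        rw [dxz]
        nlinarith [mul_le_mul_of_nonneg_right hK (by linarith : (0:ℝ) ≤ y - x),
          mul_le_mul_of_nonneg_right hK' (by linarith : (0:ℝ) ≤ z - y)]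
  intro x hx z hz
  rcases le_total x z with hxz | hzx
  · exact main x hx z hz hxz
  · rw [dist_comm (f x) (f z), dist_comm x z]
    exact main z hz x hx hzx

/-- A locally Lipschitz function on a compact interval is Lipschitz there. -/
lemma exists_lipschitzOnWith_Icc {f : ℝ → ℝ} {a b : ℝ} (hab : a ≤ b)
    (h : LocallyLipschitzOn (Set.Icc a b) f) :
    ∃ K : NNReal, LipschitzOnWith K f (Set.Icc a b) := by
  set S : Set ℝ := {y | y ∈ Set.Icc a b ∧ ∃ K : NNReal, LipschitzOnWith K f (Set.Icc a y)} with hS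
  have haS : a ∈ S := by
    refine ⟨⟨le_rfl, hab⟩, 1, ?_⟩
    intro x hx z hz
    rw [Set.Icc_self, Set.mem_singleton_iff] at hx hz
    subst hx; subst hz; simp
  have hbdd : BddAbove S := ⟨b, fun y hy => hy.1.2⟩
  set y0 := sSup S with hy0
  have hy0mem : y0 ∈ Set.Icc a b := ⟨le_csSup hbdd haS, csSup_le ⟨a, haS⟩ fun y hy => hy.1.2⟩
  obtain ⟨K', u, hu, hK'⟩ := h hy0mem
  rw [Metric.mem_nhdsWithin_iff] at hu
  obtain ⟨δ, hδ, hball⟩ := hu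
  obtain ⟨y, hyS, hy⟩ := exists_lt_of_lt_csSup ⟨a, haS⟩ (show y0 - δ/2 < y0 by linarith)
  have hyle : y ≤ y0 := le_csSup hbdd hyS
  obtain ⟨K, hK⟩ := hyS.2
  set b' := min b (y0 + δ/2) with hb'
  have hyb' : y ≤ b' := le_min hyS.1.2 (by linarith)
  have hsub : Set.Icc y b' ⊆ Metric.ball y0 δ ∩ Set.Icc a b := by
    intro z hz
    have hz1 := hz.1
    have hz2 := hz.2
    have hzb : z ≤ b := hz2.trans (min_le_left _ _)
    have hzd : z ≤ y0 + δ/2 := hz2.trans (min_le_right _ _)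
    refine ⟨?_, hyS.1.1.trans hz1, hzb⟩
    rw [Metric.mem_ball, Real.dist_eq, abs_sub_lt_iff]
    constructor <;> linarith
  have h2 : LipschitzOnWith K' f (Set.Icc y b') :=
    hK'.mono fun z hz => hball (hsub hz)
  have hb'S : b' ∈ S := ⟨⟨hyS.1.1.trans hyb', min_le_left _ _⟩, K ⊔ K',
    lip_join_aux hyS.1.1 hyb' hK h2⟩
  have hb'le : b' ≤ y0 := le_csSup hbdd hb'S
  have hby0 : b ≤ y0 := by
    by_contra hlt
    push_neg at hlt
    have : y0 < b' := lt_min hlt (by linarith)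
    linarith
  have hbb' : b' = b := by
    have hy0b : y0 = b := le_antisymm hy0mem.2 hby0
    rw [hb', hy0b]
    exact min_eq_left (by linarith)
  rw [hbb'] at hb'S
  exact hb'S.2

/-- Key a.e. comparison lemma: a Lipschitz function on `[a,b]` with a.e. nonpositive
derivative is nonincreasing. -/
lemma ae_deriv_nonpos_le {a b : ℝ} {f : ℝ → ℝ} {L : NNReal} (hab : a ≤ b)
    (hf : LipschitzOnWith L f (Set.Icc a b))
    (hd : ∀ᵐ x ∂(volume.restrict (Set.Icc a b)), DifferentiableAt ℝ f x ∧ deriv f x ≤ 0) :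
    f b ≤ f a := by
  have hfd := lipschitzOnWith_iff_dist_le_mul.1 hf
  have key : ∀ ε : ℝ, 0 < ε → f b ≤ f a + ε := by
    intro ε hε
    set Lr : ℝ := (L : ℝ) + 1 with hLr
    have hLrpos : 0 < Lr := by positivity
    set ε' : ℝ := ε / Lr with hε'def
    have hε' : 0 < ε' := div_pos hε hLrpos
    have hE : volume ({x | ¬(DifferentiableAt ℝ f x ∧ deriv f x ≤ 0)} ∩ Set.Icc a b) = 0 := by
      have h0 := ae_iff.1 hd
      rwa [Measure.restrict_apply' measurableSet_Icc] at h0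
    obtain ⟨U, hUE, hUopen, hUvol⟩ := Set.exists_isOpen_lt_of_lt
      ({x | ¬(DifferentiableAt ℝ f x ∧ deriv f x ≤ 0)} ∩ Set.Icc a b) (ENNReal.ofReal ε')
      (by rw [hE]; exact ENNReal.ofReal_pos.2 hε')
    set g : ℝ → ℝ := fun x => Lr * (volume (U ∩ Set.Ioc a x)).toReal with hg
    have hUfin : volume U < ⊤ := hUvol.trans_le le_top
    have hvolfin : ∀ x, volume (U ∩ Set.Ioc a x) ≠ ⊤ :=
      fun x => (lt_of_le_of_lt (measure_mono Set.inter_subset_left) hUfin).ne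
    have hgadd : ∀ x z, a ≤ x → x ≤ z →
        g z - g x = Lr * (volume (U ∩ Set.Ioc x z)).toReal := by
      intro x z hax hxz
      have hsplit : U ∩ Set.Ioc a z = (U ∩ Set.Ioc a x) ∪ (U ∩ Set.Ioc x z) := by
        rw [← Set.inter_union_distrib_left, Set.Ioc_union_Ioc_eq_Ioc hax hxz]
      have hdisj : Disjoint (U ∩ Set.Ioc a x) (U ∩ Set.Ioc x z) :=
        (Set.Ioc_disjoint_Ioc_of_le le_rfl).mono Set.inter_subset_right Set.inter_subset_right
      have hmeas : MeasurableSet (U ∩ Set.Ioc x z) :=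
        hUopen.measurableSet.inter measurableSet_Ioc
      simp only [hg]
      rw [hsplit, measure_union hdisj hmeas,
        ENNReal.toReal_add (hvolfin x)
          ((lt_of_le_of_lt (measure_mono Set.inter_subset_left) hUfin).ne)]
      ring
    have hgub : ∀ x z, x ≤ z → (volume (U ∩ Set.Ioc x z)).toReal ≤ z - x := by
      intro x z hxz
      have hle : volume (U ∩ Set.Ioc x z) ≤ ENNReal.ofReal (z - x) := by
        refine (measure_mono Set.inter_subset_right).trans ?_
        rw [Real.volume_Ioc]
      exact ENNReal.toReal_le_of_le_ofReal (by linarith) hle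
    have hgmono : ∀ x z, a ≤ x → x ≤ z → g x ≤ g z := by
      intro x z hax hxz
      have h0 := hgadd x z hax hxz
      have h1 : 0 ≤ Lr * (volume (U ∩ Set.Ioc x z)).toReal := by positivity
      linarith
    have hglip : LipschitzOnWith (Real.toNNReal Lr) g (Set.Icc a b) := by
      rw [lipschitzOnWith_iff_dist_le_mul]
      have main : ∀ x ∈ Set.Icc a b, ∀ z ∈ Set.Icc a b, x ≤ z →
          dist (g x) (g z) ≤ Real.toNNReal Lr * dist x z := by
        intro x hx z hz hxz
        have h0 := hgadd x z hx.1 hxz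
        have h1 := hgub x z hxz
        have h2 := hgmono x z hx.1 hxz
        have dg : dist (g x) (g z) = g z - g x := by
          rw [Real.dist_eq, abs_of_nonpos (by linarith : g x - g z ≤ 0)]; ring
        have dxz : dist x z = z - x := by
          rw [Real.dist_eq, abs_of_nonpos (by linarith : x - z ≤ 0)]; ring
        rw [dg, dxz, Real.coe_toNNReal _ hLrpos.le]
        nlinarith
      intro x hx z hz
      rcases le_total x z with hxz | hzx
      · exact main x hx z hz hxz
      · rw [dist_comm (g x) (g z), dist_comm x z]
        exact main z hz x hx hzx
    have hgcont : ContinuousOn g (Set.Icc a b) := hglip.continuousOn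
    have fence := image_le_of_liminf_slope_right_le_deriv_boundary
      (f := fun x => f x - g x) (a := a) (b := b)
      (B := fun _ => f a - g a) (B' := fun _ => 0)
      (hf.continuousOn.sub hgcont) le_rfl continuousOn_const
      (fun x _ => hasDerivWithinAt_const x _ (f a - g a)) ?_
    · have hb := fence (Set.right_mem_Icc.2 hab)
      have hga : g a = 0 := by simp [hg]
      have hgb : g b ≤ Lr * ε' := by
        have h1 : (volume (U ∩ Set.Ioc a b)).toReal ≤ ε' :=
          ENNReal.toReal_le_of_le_ofReal hε'.le
            ((measure_mono Set.inter_subset_left).trans hUvol.le)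
        simp only [hg]
        nlinarith
      have hLrε : Lr * ε' = ε := by
        rw [hε'def]
        field_simp
      linarith
    · intro x hx r hr
      by_cases hxgood : DifferentiableAt ℝ f x ∧ deriv f x ≤ 0
      · have hslope : ∀ᶠ z in nhdsWithin x {x}ᶜ, slope f x z < r :=
          (hasDerivAt_iff_tendsto_slope.1 hxgood.1.hasDerivAt).eventually_lt_const
            (lt_of_le_of_lt hxgood.2 hr)
        have hmono : nhdsWithin x (Set.Ioi x) ≤ nhdsWithin x {x}ᶜ :=
          nhdsWithin_mono x fun z hz => ne_of_gt hz
        have h1 : ∀ᶠ z in nhdsWithin x (Set.Ioi x), slope f x z < r := hslope.filter_mono hmono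
        have h2 : ∀ᶠ z in nhdsWithin x (Set.Ioi x), x < z := eventually_mem_nhdsWithin
        refine ((h1.and h2).mono ?_).frequently
        rintro z ⟨h1z, h2z⟩
        have hgz : g x ≤ g z := hgmono x z hx.1 h2z.le
        rw [slope_def_field] at h1z ⊢
        have hzx : (0:ℝ) < z - x := by linarith
        have hnum : (f z - g z) - (f x - g x) ≤ f z - f x := by linarith
        show (f z - g z - (f x - g x)) / (z - x) < r
        calc (f z - g z - (f x - g x)) / (z - x)
            ≤ (f z - f x) / (z - x) := div_le_div_of_nonneg_right hnum hzx.le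
          _ < r := h1z
      · have hxU : x ∈ U := hUE ⟨hxgood, hx.1, hx.2.le⟩
        obtain ⟨δ, hδ, hball⟩ := Metric.isOpen_iff.1 hUopen x hxU
        have hxb : x < b := hx.2
        set w := min b (x + δ/2) with hw
        have hxw : x < w := lt_min hxb (by linarith)
        have hev : Set.Ioc x w ∈ nhdsWithin x (Set.Ioi x) :=
          Ioc_mem_nhdsGT_of_mem ⟨le_rfl, hxw⟩
        refine Filter.Eventually.frequently (Filter.eventually_of_mem hev fun z hz => ?_)
        have hxz : x < z := hz.1
        have hzb : z ≤ b := hz.2.trans (min_le_left _ _)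
        have hsubU : Set.Ioc x z ⊆ U := by
          intro y hy
          apply hball
          rw [Metric.mem_ball, Real.dist_eq, abs_of_pos (by linarith [hy.1] : (0:ℝ) < y - x)]
          have hy2 : y ≤ x + δ/2 := hy.2.trans (hz.2.trans (min_le_right _ _))
          linarith
        have hgz : g z - g x = Lr * (z - x) := by
          rw [hgadd x z hx.1 hxz.le, Set.inter_eq_self_of_subset_right hsubU, Real.volume_Ioc,
            ENNReal.toReal_ofReal (by linarith)]
        have hfz : f z - f x ≤ (L : ℝ) * (z - x) := by
          have hdist := hfd z ⟨hx.1.trans hxz.le, hzb⟩ x ⟨hx.1, hx.2.le⟩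
          have dzx : dist z x = z - x := by
            rw [Real.dist_eq, abs_of_pos (by linarith : (0:ℝ) < z - x)]
          rw [Real.dist_eq, dzx] at hdist
          have habs := le_abs_self (f z - f x)
          linarith
        rw [slope_def_field, div_lt_iff₀ (by linarith : (0:ℝ) < z - x)]
        have hmul : 0 < r * (z - x) := mul_pos hr (by linarith)
        show f z - g z - (f x - g x) < r * (z - x)
        nlinarith
  by_contra hcon
  push_neg at hcon
  have := key ((f b - f a) / 2) (by linarith)
  linarith

/-- Lower blow-up rate: if `m > 0` is locally Lipschitz on `[0,T)`, satisfies
`m' ≤ m^p` almost everywhere, and `limsup_{t→T} m(t) = +∞`, then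
`m(t) ≥ ((p−1)(T−t))^(−1/(p−1))` on `[0,T)`. -/
theorem stmt18 (p T : ℝ) (hp : 1 < p) (hT : 0 < T) (m : ℝ → ℝ)
    (hpos : ∀ t, 0 ≤ t → t < T → 0 < m t)
    (hlip : LocallyLipschitzOn (Set.Ico 0 T) m)
    (hderiv : ∀ᵐ t ∂(volume.restrict (Set.Ico 0 T)),
      DifferentiableAt ℝ m t ∧ deriv m t ≤ m t ^ p)
    (hblow : ∀ M : ℝ, ∃ᶠ t in nhdsWithin T (Set.Iio T), M < m t) :
    ∀ t, 0 ≤ t → t < T → ((p - 1) * (T - t)) ^ (-(1 : ℝ) / (p - 1)) ≤ m t := by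
  intro t ht htT
  have hc : (0:ℝ) < p - 1 := by linarith
  -- Main monotonicity step
  have main : ∀ s, t ≤ s → s < T →
      m t ^ (-(p-1)) ≤ m s ^ (-(p-1)) + (p-1) * (s - t) := by
    intro s hts hsT
    have hsub : Set.Icc t s ⊆ Set.Ico 0 T := fun x hx => ⟨ht.trans hx.1, lt_of_le_of_lt hx.2 hsT⟩
    -- Lipschitz constant for m on [t,s]
    obtain ⟨K, hK⟩ := exists_lipschitzOnWith_Icc hts ((hlip.mono hsub))
    -- minimum of m on [t,s]
    have hmc : ContinuousOn m (Set.Icc t s) := hK.continuousOn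
    obtain ⟨x₀, hx₀mem, hx₀min⟩ :=
      isCompact_Icc.exists_isMinOn (Set.nonempty_Icc.2 hts) hmc
    set δ : ℝ := m x₀ with hδdef
    have hδpos : 0 < δ := hpos x₀ (ht.trans hx₀mem.1) (lt_of_le_of_lt hx₀mem.2 hsT)
    have hmaps : Set.MapsTo m (Set.Icc t s) (Set.Ici δ) := fun x hx => hx₀min hx
    -- Lipschitz constant for y ↦ y ^ (-(p-1)) on [δ, ∞)
    have hCnn : (0:ℝ) ≤ (p-1) * δ ^ (-(p-1)-1) :=
      mul_nonneg (by linarith) (Real.rpow_nonneg hδpos.le _)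
    set Cr : NNReal := ⟨(p-1) * δ ^ (-(p-1)-1), hCnn⟩ with hCr
    have hr : LipschitzOnWith Cr (fun y : ℝ => y ^ (-(p-1))) (Set.Ici δ) := by
      apply Convex.lipschitzOnWith_of_nnnorm_hasDerivWithin_le
        (f' := fun y : ℝ => (-(p-1)) * y ^ (-(p-1) - 1)) (convex_Ici δ)
      · intro x hx
        exact (Real.hasDerivAt_rpow_const
          (Or.inl (ne_of_gt (hδpos.trans_le hx)))).hasDerivWithinAt
      · intro x hx
        rw [← NNReal.coe_le_coe, coe_nnnorm]
        have h1 : x ^ (-(p-1)-1) ≤ δ ^ (-(p-1)-1) :=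
          Real.rpow_le_rpow_of_nonpos hδpos hx (by linarith)
        have h2 : 0 ≤ x ^ (-(p-1)-1) := Real.rpow_nonneg (hδpos.trans_le hx).le _
        rw [norm_mul, norm_neg, Real.norm_eq_abs, Real.norm_eq_abs,
          abs_of_pos (by linarith : (0:ℝ) < p - 1), abs_of_nonneg h2]
        show (p-1) * x ^ (-(p-1)-1) ≤ (p-1) * δ ^ (-(p-1)-1)
        nlinarith
    have hGlip : LipschitzOnWith (Cr * K) (fun x => m x ^ (-(p-1))) (Set.Icc t s) :=
      hr.comp hK hmaps
    have hlin : LipschitzOnWith (Real.toNNReal (p-1)) (fun x : ℝ => (p-1) * x) (Set.Icc t s) := by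
      rw [lipschitzOnWith_iff_dist_le_mul]
      intro x _ z _
      rw [Real.dist_eq, Real.dist_eq, ← mul_sub, abs_mul,
        abs_of_pos (by linarith : (0:ℝ) < p - 1), Real.coe_toNNReal _ (by linarith : (0:ℝ) ≤ p-1)]
    have hFlip : LipschitzOnWith (Cr * K + Real.toNNReal (p-1))
        (fun x => -(m x ^ (-(p-1)) + (p-1) * x)) (Set.Icc t s) :=
      (hGlip.add hlin).neg
    -- a.e. derivative condition
    have hder' : ∀ᵐ x ∂(volume.restrict (Set.Icc t s)),
        DifferentiableAt ℝ m x ∧ deriv m x ≤ m x ^ p :=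
      ae_restrict_of_ae_restrict_of_subset hsub hderiv
    have hdf : ∀ᵐ x ∂(volume.restrict (Set.Icc t s)),
        DifferentiableAt ℝ (fun x => -(m x ^ (-(p-1)) + (p-1) * x)) x ∧
        deriv (fun x => -(m x ^ (-(p-1)) + (p-1) * x)) x ≤ 0 := by
      filter_upwards [hder', ae_restrict_mem measurableSet_Icc] with x hx hmem
      have hmx : 0 < m x := hpos x (ht.trans hmem.1) (lt_of_le_of_lt hmem.2 hsT)
      have hG : HasDerivAt (fun y => m y ^ (-(p-1)))
          (deriv m x * (-(p-1)) * m x ^ (-(p-1) - 1)) x :=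
        hx.1.hasDerivAt.rpow_const (Or.inl hmx.ne')
      have hL : HasDerivAt (fun y : ℝ => (p-1) * y) ((p-1) * 1) x :=
        (hasDerivAt_id x).const_mul (p-1)
      have hF : HasDerivAt (fun x => -(m x ^ (-(p-1)) + (p-1) * x))
          (-(deriv m x * (-(p-1)) * m x ^ (-(p-1) - 1) + (p-1) * 1)) x :=
        (hG.add hL).neg
      refine ⟨hF.differentiableAt, ?_⟩
      rw [hF.deriv]
      have hprod : m x ^ (-(p-1)-1) * m x ^ p = 1 := by
        rw [← Real.rpow_add hmx, show -(p-1)-1+p = (0:ℝ) by ring, Real.rpow_zero]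
      have h1 : 0 ≤ (p-1) * m x ^ (-(p-1)-1) :=
        mul_nonneg (by linarith) (Real.rpow_nonneg hmx.le _)
      have h2 : ((p-1) * m x ^ (-(p-1)-1)) * deriv m x ≤
          ((p-1) * m x ^ (-(p-1)-1)) * (m x ^ p) :=
        mul_le_mul_of_nonneg_left hx.2 h1
      have h3 : ((p-1) * m x ^ (-(p-1)-1)) * (m x ^ p) = p - 1 := by
        rw [mul_assoc, hprod, mul_one]
      nlinarith
    have hres := ae_deriv_nonpos_le hts hFlip hdf
    linarith
  -- blow-up / limit step
  have key : m t ^ (-(p-1)) ≤ (p-1) * (T - t) := by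
    have hstep : ∀ ε : ℝ, 0 < ε → m t ^ (-(p-1)) ≤ (p-1) * (T - t) + ε := by
      intro ε hε
      set M : ℝ := ε ^ (-(1:ℝ)/(p-1)) ⊔ 1 with hM
      have hMpos : (0:ℝ) < M := lt_of_lt_of_le one_pos le_sup_right
      have hεpow : 0 < ε ^ (-(1:ℝ)/(p-1)) := Real.rpow_pos_of_pos hε _
      have hMε : M ^ (-(p-1)) ≤ ε := by
        have h1 : M ^ (-(p-1)) ≤ (ε ^ (-(1:ℝ)/(p-1))) ^ (-(p-1)) :=
          Real.rpow_le_rpow_of_nonpos hεpow le_sup_left (by linarith)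
        have h2 : (ε ^ (-(1:ℝ)/(p-1))) ^ (-(p-1)) = ε := by
          rw [← Real.rpow_mul hε.le, show (-(1:ℝ)/(p-1)) * (-(p-1)) = 1 by field_simp,
            Real.rpow_one]
        linarith
      have hev1 : ∀ᶠ z in nhdsWithin T (Set.Iio T), z ∈ Set.Iio T := eventually_mem_nhdsWithin
      have hev2 : ∀ᶠ z in nhdsWithin T (Set.Iio T), z ∈ Set.Ioi t :=
        eventually_nhdsWithin_of_eventually_nhds
          (eventually_of_mem (Ioi_mem_nhds htT) fun z hz => hz)
      obtain ⟨s, hMs, hsT, hts⟩ := ((hblow M).and_eventually (hev1.and hev2)).exists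
      have hmain := main s (le_of_lt hts) hsT
      have hms : m s ^ (-(p-1)) ≤ M ^ (-(p-1)) :=
        Real.rpow_le_rpow_of_nonpos hMpos hMs.le (by linarith)
      have hst : (p-1) * (s - t) ≤ (p-1) * (T - t) := by nlinarith [hsT.out]
      linarith
    by_contra hcon
    push_neg at hcon
    have := hstep ((m t ^ (-(p-1)) - (p-1) * (T - t)) / 2) (by linarith)
    linarith
  -- conclude
  have h1 : 0 < m t := hpos t ht htT
  have h2 : 0 < m t ^ (-(p-1)) := Real.rpow_pos_of_pos h1 _
  have h3 := Real.rpow_le_rpow_of_nonpos h2 key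
    (show -(1:ℝ)/(p-1) ≤ 0 by
      apply div_nonpos_of_nonpos_of_nonneg <;> linarith)
  have h4 : (m t ^ (-(p-1))) ^ (-(1:ℝ)/(p-1)) = m t := by
    rw [← Real.rpow_mul h1.le, show (-(p-1)) * (-(1:ℝ)/(p-1)) = 1 by field_simp, Real.rpow_one]
  rwa [h4] at h3
end
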